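/- If MILP(T̄) has a feasible solution (with integral z-variables), then it has a feasible solution with the same x-variables in which, for every machine type t, the number of configurations C ∈ 𝒞_t with z_{C,t} ≠ 0 is at most 2·(|B_t|+1)·log₂(4·(|B_t|+1)·(1+ε)/ε²). -/

import Mathlib

open Finset
open scoped Classical ENNReal

noncomputable section

variable {J : Type*} [Fintype J] {K : ℕ}

/-- The set `B_t` of finite big processing-time values occurring for machine type `t`. -/
def bigSet (ε T : ℝ) (p : Fin K → J → ℝ≥0∞) (t : Fin K) : Finset ℝ≥0∞ :=
  (Finset.univ.image (p t)).filter fun v => ENNReal.ofReal (ε ^ 2 * T) < v ∧ v ≠ ⊤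

/-- The set `S_t` of small processing-time values occurring for machine type `t`. -/
def smallSet (ε T : ℝ) (p : Fin K → J → ℝ≥0∞) (t : Fin K) : Finset ℝ≥0∞ :=
  (Finset.univ.image (p t)).filter fun v => v ≤ ENNReal.ofReal (ε ^ 2 * T)

/-- The size of a configuration `C` for the set of big values `B`. -/
def confSize (B : Finset ℝ≥0∞) (C : ℝ≥0∞ → ℕ) : ℝ≥0∞ := ∑ v ∈ B, (C v : ℝ≥0∞) * v

/-- `C` is a configuration for the set of big values `B`: it is supported on `B` and has
size at most `T̄ = (1+ε)T`. -/
def IsConf (ε T : ℝ) (B : Finset ℝ≥0∞) (C : ℝ≥0∞ → ℕ) : Prop :=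
  (∀ v ∉ B, C v = 0) ∧ confSize B C ≤ ENNReal.ofReal ((1 + ε) * T)

/-- Feasibility of the (relaxed) MILP(R): `z` are the configuration variables (supported
on the configurations for each type), `x` the fractional job-assignment variables
(vanishing when the processing time exceeds `T̄ = (1+ε)T`), subject to the constraints
(1)-(4) of the paper. -/
def MILPFeasible (ε T : ℝ) (p : Fin K → J → ℝ≥0∞) (m : Fin K → ℕ) (R : ℝ)
    (z : (ℝ≥0∞ → ℕ) → Fin K → ℝ≥0∞) (x : J → Fin K → ℝ≥0∞) : Prop :=
  (∀ C t, ¬ IsConf ε T (bigSet ε T p t) C → z C t = 0) ∧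
  (∀ j t, ENNReal.ofReal ((1 + ε) * T) < p t j → x j t = 0) ∧
  (∀ t, ∑' C : ℝ≥0∞ → ℕ, z C t = m t) ∧
  (∀ j, ∑ t, x j t = 1) ∧
  (∀ t, ∀ v ∈ bigSet ε T p t,
    ∑ j ∈ Finset.univ.filter (fun j => p t j = v), x j t ≤
      ∑' C : ℝ≥0∞ → ℕ, (C v : ℝ≥0∞) * z C t) ∧
  (∀ t, (∑' C : ℝ≥0∞ → ℕ, confSize (bigSet ε T p t) C * z C t) +
      ∑ v ∈ smallSet ε T p t, v * ∑ j ∈ Finset.univ.filter (fun j => p t j = v), x j t ≤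
      (m t : ℝ≥0∞) * ENNReal.ofReal R)

/-- The machines: `m t` machines of each type `t`. -/
def Machine (m : Fin K → ℕ) : Type := Σ t : Fin K, Fin (m t)

/-- The load of machine `i` under schedule `σ`. -/
def load (p : Fin K → J → ℝ≥0∞) (m : Fin K → ℕ) (σ : J → Machine m) (i : Machine m) :
    ℝ≥0∞ :=
  ∑ j ∈ Finset.univ.filter (fun j => σ j = i), p i.1 j


lemma ES_core {α κ : Type*} [Fintype κ] (s : Finset α) (φ : α → κ → ℕ) (Mx : ℕ)
    (hφ0 : ∀ a, φ a ≠ 0) (hφM : ∀ a ∈ s, ∀ k, φ a k ≤ Mx) :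
    ∀ (n : ℕ) (f : α → ℕ), (s.filter fun a => f a ≠ 0).card = n →
      (∀ a, f a ≠ 0 → a ∈ s) →
      ∃ g : α → ℕ, (∀ a, g a ≠ 0 → f a ≠ 0) ∧
        (∀ k, ∑ a ∈ s, g a * φ a k = ∑ a ∈ s, f a * φ a k) ∧
        2 ^ (s.filter fun a => g a ≠ 0).card ≤
          ((s.filter fun a => g a ≠ 0).card * Mx + 1) ^ Fintype.card κ := by
  intro n
  induction n using Nat.strong_induction_on with
  | _ n ih =>
  intro f hn hf
  by_cases hstop : 2 ^ n ≤ (n * Mx + 1) ^ Fintype.card κ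
  · exact ⟨f, fun a h => h, fun k => rfl, by rwa [hn]⟩
  set t : Finset α := s.filter fun a => f a ≠ 0 with ht
  have htcard : t.card = n := hn
  have hts : t ⊆ s := Finset.filter_subset _ _
  -- pigeonhole
  have hbound : ∀ S ∈ t.powerset, ∀ k, (∑ a ∈ S, φ a k) ≤ n * Mx := by
    intro S hS k
    have hSt : S ⊆ t := Finset.mem_powerset.mp hS
    calc ∑ a ∈ S, φ a k ≤ ∑ _a ∈ S, Mx :=
          Finset.sum_le_sum fun a ha => hφM a (hts (hSt ha)) k
      _ = S.card * Mx := by rw [Finset.sum_const, smul_eq_mul]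
      _ ≤ n * Mx := Nat.mul_le_mul_right _ (htcard ▸ Finset.card_le_card hSt)
  obtain ⟨S, hS, S', hS', hne, hFeq⟩ :
      ∃ S ∈ t.powerset, ∃ S' ∈ t.powerset, S ≠ S' ∧
        (fun (T : Finset α) (k : κ) => (⟨min (∑ a ∈ T, φ a k) (n * Mx),
            Nat.lt_succ_of_le (min_le_right _ _)⟩ : Fin (n * Mx + 1))) S =
        (fun (T : Finset α) (k : κ) => (⟨min (∑ a ∈ T, φ a k) (n * Mx),
            Nat.lt_succ_of_le (min_le_right _ _)⟩ : Fin (n * Mx + 1))) S' := by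
    apply Finset.exists_ne_map_eq_of_card_lt_of_maps_to (t := (Finset.univ : Finset (κ → Fin (n * Mx + 1))))
    · rw [Finset.card_powerset, htcard, Finset.card_univ, Fintype.card_fun, Fintype.card_fin]
      exact lt_of_not_ge hstop
    · intro S _; exact Finset.mem_univ _
  have hsums : ∀ k, ∑ a ∈ S, φ a k = ∑ a ∈ S', φ a k := by
    intro k
    have h1 := congrFun hFeq k
    have h2 : min (∑ a ∈ S, φ a k) (n * Mx) = min (∑ a ∈ S', φ a k) (n * Mx) :=
      congrArg Fin.val h1
    rwa [min_eq_left (hbound S hS k), min_eq_left (hbound S' hS' k)] at h2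
  set A : Finset α := S \ S' with hA
  set A' : Finset α := S' \ S with hA'
  have hAt : A ⊆ t := (Finset.sdiff_subset).trans (Finset.mem_powerset.mp hS)
  have hA't : A' ⊆ t := (Finset.sdiff_subset).trans (Finset.mem_powerset.mp hS')
  have hdiffsum : ∀ k, ∑ a ∈ A, φ a k = ∑ a ∈ A', φ a k := by
    intro k
    have e1 := Finset.sum_inter_add_sum_sdiff S S' (fun a => φ a k)
    have e2 := Finset.sum_inter_add_sum_sdiff S' S (fun a => φ a k)
    rw [Finset.inter_comm] at e2
    have e3 := hsums k
    simp only [hA, hA']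
    omega
  -- A is nonempty
  have hAne : A.Nonempty := by
    rcases Finset.eq_empty_or_nonempty A with h | h
    · exfalso
      have hSS' : S ⊆ S' := Finset.sdiff_eq_empty_iff_subset.mp h
      have hA'ne : A'.Nonempty := by
        rcases Finset.eq_empty_or_nonempty A' with h' | h'
        · exact absurd (Finset.Subset.antisymm hSS' (Finset.sdiff_eq_empty_iff_subset.mp h')) hne
        · exact h'
      obtain ⟨a, ha⟩ := hA'ne
      apply hφ0 a
      funext k
      have := hdiffsum k
      rw [h, Finset.sum_empty] at this
      exact (Finset.sum_eq_zero_iff.mp this.symm) a ha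
    · exact h
  obtain ⟨a₀, ha₀A, ha₀min⟩ := Finset.exists_min_image A f hAne
  set kk : ℕ := f a₀ with hkk
  have hkk1 : kk ≠ 0 := by
    have : a₀ ∈ t := hAt ha₀A
    exact (Finset.mem_filter.mp this).2
  have hdisj : ∀ a ∈ A, a ∉ A' := by
    intro a ha ha'
    exact (Finset.mem_sdiff.mp ha').2 ((Finset.mem_sdiff.mp ha).1)
  set g : α → ℕ := fun a => if a ∈ A then f a - kk else if a ∈ A' then f a + kk else f a
    with hg
  have hftne : ∀ a ∈ t, f a ≠ 0 := fun a ha => (Finset.mem_filter.mp ha).2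
  have hgsupp : ∀ a, g a ≠ 0 → f a ≠ 0 := by
    intro a hga
    by_cases h1 : a ∈ A
    · exact hftne a (hAt h1)
    by_cases h2 : a ∈ A'
    · exact hftne a (hA't h2)
    · simpa [hg, h1, h2] using hga
  have hE : ∀ k, ∑ a ∈ s, g a * φ a k = ∑ a ∈ s, f a * φ a k := by
    intro k
    have key : ∀ a ∈ s, g a * φ a k + (if a ∈ A then kk * φ a k else 0)
        = f a * φ a k + (if a ∈ A' then kk * φ a k else 0) := by
      intro a _
      by_cases h1 : a ∈ A
      · have h2 : a ∉ A' := hdisj a h1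
        have hkf : kk ≤ f a := ha₀min a h1
        simp only [hg, h1, h2, if_pos, if_neg, if_true, if_false]
        rw [← add_mul, Nat.sub_add_cancel hkf, add_zero]
      · by_cases h2 : a ∈ A'
        · simp only [hg, h1, h2, if_neg, if_pos, if_false, if_true]
          ring
        · simp [hg, h1, h2]
    have hsum := Finset.sum_congr rfl key
    rw [Finset.sum_add_distrib, Finset.sum_add_distrib] at hsum
    have hAs : A ⊆ s := hAt.trans hts
    have hA's : A' ⊆ s := hA't.trans hts
    have eA : ∑ a ∈ s, (if a ∈ A then kk * φ a k else 0) = ∑ a ∈ A, kk * φ a k := by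
      rw [Finset.sum_ite_mem, Finset.inter_eq_right.mpr hAs]
    have eA' : ∑ a ∈ s, (if a ∈ A' then kk * φ a k else 0) = ∑ a ∈ A', kk * φ a k := by
      rw [Finset.sum_ite_mem, Finset.inter_eq_right.mpr hA's]
    rw [eA, eA'] at hsum
    have : ∑ a ∈ A, kk * φ a k = ∑ a ∈ A', kk * φ a k := by
      rw [← Finset.mul_sum, ← Finset.mul_sum, hdiffsum k]
    omega
  -- support shrank
  have hgsub : (s.filter fun a => g a ≠ 0) ⊂ t := by
    constructor
    · intro a ha
      obtain ⟨has, hga⟩ := Finset.mem_filter.mp ha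
      exact Finset.mem_filter.mpr ⟨has, hgsupp a hga⟩
    · intro hcon
      have ha₀t : a₀ ∈ t := hAt ha₀A
      have : g a₀ ≠ 0 := (Finset.mem_filter.mp (hcon ha₀t)).2
      apply this
      simp [hg, ha₀A, hkk]
  have hlt : (s.filter fun a => g a ≠ 0).card < n := htcard ▸ Finset.card_lt_card hgsub
  obtain ⟨g', h1, h2, h3⟩ := ih _ hlt g rfl (fun a h => hf a (hgsupp a h))
  exact ⟨g', fun a h => hgsupp a (h1 a h), fun k => (h2 k).trans (hE k), h3⟩


lemma card_le_log {N Mx d : ℕ} (hd : 1 ≤ d) (hMx : 1 ≤ Mx)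
    (h : 2 ^ N ≤ (N * Mx + 1) ^ d) {M : ℝ} (hM : (Mx : ℝ) ≤ M) :
    (N : ℝ) ≤ 2 * d * Real.logb 2 (4 * d * M) := by
  have hM1 : (1 : ℝ) ≤ M := le_trans (by exact_mod_cast hMx) hM
  have hd1 : (1 : ℝ) ≤ (d : ℝ) := by exact_mod_cast hd
  have hdpos : (0 : ℝ) < (d : ℝ) := lt_of_lt_of_le one_pos hd1
  have hlogb_nonneg : 0 ≤ Real.logb 2 (4 * d * M) :=
    Real.logb_nonneg (by norm_num) (by nlinarith)
  rcases Nat.eq_zero_or_pos N with hN0 | hNpos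
  · subst hN0; simp; positivity
  have hn1 : (1 : ℝ) ≤ (N : ℝ) := by exact_mod_cast hNpos
  have hnpos : (0 : ℝ) < (N : ℝ) := lt_of_lt_of_le one_pos hn1
  set L := Real.log 2 with hLdef
  have hL : (0.6931471803 : ℝ) < L := Real.log_two_gt_d9
  have hL' : L < 0.6931471808 := Real.log_two_lt_d9
  have hLpos : 0 < L := by linarith
  -- step A : N * L ≤ d * log (2 * N * M)
  have hcast : ((2 : ℝ)) ^ N ≤ ((N * Mx + 1 : ℕ) : ℝ) ^ d := by exact_mod_cast h
  have hB : ((N * Mx + 1 : ℕ) : ℝ) ≤ 2 * N * M := by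
    push_cast
    have hMx1 : (1 : ℝ) ≤ (Mx : ℝ) := by exact_mod_cast hMx
    nlinarith
  have hA : (N : ℝ) * L ≤ d * Real.log (2 * N * M) := by
    have h1 : Real.log ((2 : ℝ) ^ N) ≤ Real.log (((N * Mx + 1 : ℕ) : ℝ) ^ d) :=
      Real.log_le_log (by positivity) hcast
    rw [Real.log_pow, Real.log_pow] at h1
    have h2 : Real.log ((N * Mx + 1 : ℕ) : ℝ) ≤ Real.log (2 * N * M) :=
      Real.log_le_log (by positivity) hB
    calc (N : ℝ) * L = N * Real.log 2 := rfl
      _ ≤ d * Real.log ((N * Mx + 1 : ℕ) : ℝ) := h1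
      _ ≤ d * Real.log (2 * N * M) := by
          apply mul_le_mul_of_nonneg_left h2 (le_of_lt hdpos)
  -- decompose logs
  have hlog2NM : Real.log (2 * N * M) = L + Real.log N + Real.log M := by
    rw [mul_assoc, Real.log_mul (by norm_num) (by positivity),
      Real.log_mul (by positivity) (by positivity)]
    ring
  have hlmnn : 0 ≤ Real.log M := Real.log_nonneg hM1
  have hldnn : 0 ≤ Real.log (d : ℝ) := Real.log_nonneg hd1
  -- step D : log N ≤ N/(4d) + log 4 + log d - 1
  have hD : Real.log (N : ℝ) ≤ (N : ℝ) / (4 * d) + Real.log 4 + Real.log d - 1 := by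
    have hx : (0 : ℝ) < (N : ℝ) / (4 * d) := by positivity
    have := Real.log_le_sub_one_of_pos hx
    rw [Real.log_div (ne_of_gt hnpos) (by positivity),
      Real.log_mul (by norm_num) (ne_of_gt hdpos)] at this
    linarith
  have hlog4 : Real.log (4 : ℝ) = 2 * L := by
    have : (4 : ℝ) = 2 ^ 2 := by norm_num
    rw [this, Real.log_pow]; push_cast; ring
  -- final goal, after multiplying by L
  have hgoal_log : Real.log (4 * d * M) = 2 * L + Real.log d + Real.log M := by
    rw [Real.log_mul (by positivity) (by positivity),
      Real.log_mul (by norm_num) (ne_of_gt hdpos), hlog4]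
  rw [Real.logb, hgoal_log]
  -- turn into N * L ≤ ...
  have hfin : (N : ℝ) * L ≤ 2 * d * (2 * L + Real.log d + Real.log M) := by
    set n := (N : ℝ)
    set dd := (d : ℝ)
    set lm := Real.log M
    set ld := Real.log dd
    set ln := Real.log n
    have H3 : n * L ≤ dd * L + dd * lm + n / 4 + 2 * L * dd + ld * dd - dd := by
      have h2 : dd * ln ≤ dd * (n / (4 * dd) + 2 * L + ld - 1) := by
        apply mul_le_mul_of_nonneg_left _ (le_of_lt hdpos)
        rw [hlog4] at hD
        linarith [hD]
      have h4 : dd * (n / (4 * dd)) = n / 4 := by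
        field_simp
      calc n * L ≤ dd * (L + ln + lm) := by rw [hlog2NM] at hA; linarith [hA]
        _ = dd * L + dd * lm + dd * ln := by ring
        _ ≤ dd * L + dd * lm + dd * (n / (4 * dd) + 2 * L + ld - 1) := by linarith
        _ = dd * L + dd * lm + n / 4 + 2 * L * dd + ld * dd - dd := by
            rw [show dd * (n / (4 * dd) + 2 * L + ld - 1)
              = dd * (n / (4 * dd)) + 2 * L * dd + ld * dd - dd from by ring, h4]
            ring
    nlinarith [mul_nonneg hlmnn (le_of_lt hLpos), mul_nonneg hldnn (le_of_lt hLpos),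
      mul_le_mul_of_nonneg_right H3 (le_of_lt hLpos), sq_nonneg L,
      mul_nonneg (mul_nonneg hlmnn (le_of_lt hLpos)) (le_of_lt hdpos),
      mul_nonneg (mul_nonneg hldnn (le_of_lt hLpos)) (le_of_lt hdpos),
      mul_nonneg hlmnn hdpos.le, mul_nonneg hldnn hdpos.le]
  calc (N : ℝ) = (N * L) / L := by field_simp
    _ ≤ (2 * d * (2 * L + Real.log d + Real.log M)) / L := (div_le_div_iff_of_pos_right hLpos).mpr hfin
    _ = 2 * d * ((2 * L + Real.log d + Real.log M) / Real.log 2) := by rw [← hLdef]; ring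

/-- Existence of a feasible MILP solution with thin support: the same
`x`-variables, and for every machine type at most
`2(|B_t|+1)·log₂(4(|B_t|+1)(1+ε)/ε²)` non-zero configuration variables. -/
theorem MILP_few_nonzero_variables (ε T : ℝ) (hε : 0 < ε) (hε1 : ε ≤ 1) (hT : 0 < T)
    (p : Fin K → J → ℝ≥0∞) (hp : ∀ t j, p t j ≠ 0) (m : Fin K → ℕ)
    (z : (ℝ≥0∞ → ℕ) → Fin K → ℝ≥0∞) (x : J → Fin K → ℝ≥0∞)
    (hfeas : MILPFeasible ε T p m ((1 + ε) * T) z x)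
    (hint : ∀ C t, ∃ n : ℕ, z C t = n) :
    ∃ z' : (ℝ≥0∞ → ℕ) → Fin K → ℝ≥0∞,
      MILPFeasible ε T p m ((1 + ε) * T) z' x ∧
      (∀ C t, ∃ n : ℕ, z' C t = n) ∧
      ∀ t, {C : ℝ≥0∞ → ℕ | z' C t ≠ 0}.Finite ∧
        (({C : ℝ≥0∞ → ℕ | z' C t ≠ 0}.ncard : ℝ) ≤
          2 * ((bigSet ε T p t).card + 1) *
            Real.logb 2 (4 * ((bigSet ε T p t).card + 1) * (1 + ε) / ε ^ 2)) := by
  obtain ⟨hz0, hx0, hm, hx1, hbig, hsize⟩ := hfeas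
  choose fz hfz using hint
  -- support of z is finite for each type
  have hfin : ∀ t, {C : ℝ≥0∞ → ℕ | z C t ≠ 0}.Finite := by
    intro t
    rw [← Set.not_infinite]
    intro hinf
    obtain ⟨F, hFsub, hFcard⟩ := hinf.exists_subset_card_eq (m t + 1)
    have hle : ((m t + 1 : ℕ) : ℝ≥0∞) ≤ ∑' C, z C t := by
      calc ((m t + 1 : ℕ) : ℝ≥0∞) = ∑ _C ∈ F, 1 := by
            rw [Finset.sum_const, hFcard]; simp
        _ ≤ ∑ C ∈ F, z C t := by
            refine Finset.sum_le_sum fun C hC => ?_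
            have hzC : z C t ≠ 0 := hFsub hC
            rw [hfz C t] at hzC ⊢
            exact_mod_cast Nat.one_le_iff_ne_zero.mpr (by exact_mod_cast hzC)
        _ ≤ ∑' C, z C t := ENNReal.sum_le_tsum F
    rw [hm t] at hle
    have : m t + 1 ≤ m t := by exact_mod_cast hle
    omega
  set St : Fin K → Finset (ℝ≥0∞ → ℕ) := fun t => (hfin t).toFinset with hStdef
  have hmemSt : ∀ t C, C ∈ St t ↔ z C t ≠ 0 := fun t C => (hfin t).mem_toFinset
  set Mx : ℕ := ⌊(1 + ε) / ε ^ 2⌋₊ with hMxdef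
  have hMr1 : (1 : ℝ) ≤ (1 + ε) / ε ^ 2 := by
    rw [le_div_iff₀ (by positivity)]
    nlinarith
  have hMx1 : 1 ≤ Mx := Nat.le_floor (by exact_mod_cast hMr1)
  have hMle : (Mx : ℝ) ≤ (1 + ε) / ε ^ 2 := Nat.floor_le (by positivity)
  have hfzsupp : ∀ t C, fz C t ≠ 0 → C ∈ St t := by
    intro t C h
    rw [hmemSt, hfz C t]
    exact_mod_cast h
  -- apply the sparsification per machine type
  have key : ∀ t, ∃ g : (ℝ≥0∞ → ℕ) → ℕ,
      (∀ C, g C ≠ 0 → fz C t ≠ 0) ∧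
      ((∑ C ∈ St t, (g C : ℝ≥0∞)) = ∑ C ∈ St t, (fz C t : ℝ≥0∞)) ∧
      (∀ v ∈ bigSet ε T p t,
        ∑ C ∈ St t, (C v : ℝ≥0∞) * g C = ∑ C ∈ St t, (C v : ℝ≥0∞) * fz C t) ∧
      2 ^ ((St t).filter fun C => g C ≠ 0).card ≤
        (((St t).filter fun C => g C ≠ 0).card * Mx + 1) ^ ((bigSet ε T p t).card + 1) := by
    intro t
    set B := bigSet ε T p t with hBdef
    set φ : (ℝ≥0∞ → ℕ) → Option {v // v ∈ B} → ℕ :=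
      fun C o => o.elim 1 fun v => C v.1 with hφdef
    have hφ0 : ∀ C, φ C ≠ 0 := by
      intro C h
      simpa [hφdef] using congrFun h none
    have hφM : ∀ C ∈ St t, ∀ k, φ C k ≤ Mx := by
      intro C hC k
      have hzC : z C t ≠ 0 := (hmemSt t C).mp hC
      have hconf : IsConf ε T B C := by
        by_contra hcon
        exact hzC (hz0 C t hcon)
      obtain ⟨hCsup, hCsize⟩ := hconf
      match k with
      | none => exact hMx1
      | some v =>
        have hv : v.1 ∈ B := v.2
        have h1 : (C v.1 : ℝ≥0∞) * v.1 ≤ ENNReal.ofReal ((1 + ε) * T) :=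
          le_trans (Finset.single_le_sum (f := fun u => (C u : ℝ≥0∞) * u)
            (fun u _ => zero_le) hv) hCsize
        have hvlt : ENNReal.ofReal (ε ^ 2 * T) < v.1 := (Finset.mem_filter.mp hv).2.1
        have h2 : (C v.1 : ℝ≥0∞) * ENNReal.ofReal (ε ^ 2 * T)
            ≤ ENNReal.ofReal ((1 + ε) * T) := le_trans (mul_le_mul_right hvlt.le _) h1
        have h3 : ENNReal.ofReal ((C v.1 : ℝ) * (ε ^ 2 * T))
            ≤ ENNReal.ofReal ((1 + ε) * T) := by
          rwa [ENNReal.ofReal_mul (by positivity), ENNReal.ofReal_natCast]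
        have h4 : (C v.1 : ℝ) * (ε ^ 2 * T) ≤ (1 + ε) * T :=
          (ENNReal.ofReal_le_ofReal_iff (by positivity)).mp h3
        have h5 : (C v.1 : ℝ) ≤ (1 + ε) / ε ^ 2 := by
          rw [le_div_iff₀ (by positivity)]
          nlinarith
        exact Nat.le_floor h5
    obtain ⟨g, hg1, hg2, hg3⟩ := ES_core (St t) φ Mx hφ0 hφM
      ((St t).filter fun C => fz C t ≠ 0).card (fun C => fz C t) rfl (hfzsupp t)
    have hcardκ : Fintype.card (Option {v // v ∈ B}) = B.card + 1 := by
      simp [Fintype.card_option]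
    refine ⟨g, hg1, ?_, ?_, by rw [← hcardκ]; exact hg3⟩
    · have h := hg2 none
      simp only [hφdef, Option.elim_none, mul_one] at h
      exact_mod_cast congrArg (Nat.cast : ℕ → ℝ≥0∞) h
    · intro v hv
      have h := hg2 (some ⟨v, hv⟩)
      simp only [hφdef, Option.elim_some] at h
      have h' : ((∑ C ∈ St t, g C * C v : ℕ) : ℝ≥0∞)
          = ((∑ C ∈ St t, fz C t * C v : ℕ) : ℝ≥0∞) := by exact_mod_cast h
      push_cast at h'
      calc ∑ C ∈ St t, (C v : ℝ≥0∞) * g C = ∑ C ∈ St t, (g C : ℝ≥0∞) * C v := by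
            exact Finset.sum_congr rfl fun C _ => mul_comm _ _
        _ = ∑ C ∈ St t, (fz C t : ℝ≥0∞) * C v := h'
        _ = ∑ C ∈ St t, (C v : ℝ≥0∞) * fz C t :=
            Finset.sum_congr rfl fun C _ => mul_comm _ _
  choose g hg1 hg2 hg3 hg4 using key
  have hgsuppSt : ∀ t C, g t C ≠ 0 → C ∈ St t := fun t C h => hfzsupp t C (hg1 t C h)
  have hgz : ∀ t C, g t C = 0 → (g t C : ℝ≥0∞) = 0 := fun t C h => by rw [h]; simp
  -- tsum reductions
  have htz' : ∀ t (w : (ℝ≥0∞ → ℕ) → ℝ≥0∞),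
      ∑' C, w C * (g t C : ℝ≥0∞) = ∑ C ∈ St t, w C * (g t C : ℝ≥0∞) := by
    intro t w
    refine tsum_eq_sum fun C hC => ?_
    have : g t C = 0 := by
      by_contra h
      exact hC (hgsuppSt t C h)
    rw [this]; simp
  have htz : ∀ t (w : (ℝ≥0∞ → ℕ) → ℝ≥0∞),
      ∑' C, w C * z C t = ∑ C ∈ St t, w C * (fz C t : ℝ≥0∞) := by
    intro t w
    rw [tsum_eq_sum (s := St t) fun C hC => ?_]
    · exact Finset.sum_congr rfl fun C _ => by rw [hfz C t]
    · rw [(not_iff_not.mpr (hmemSt t C)).mp hC |> not_not.mp]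
      exact mul_zero _
  refine ⟨fun C t => (g t C : ℝ≥0∞), ⟨?_, hx0, ?_, hx1, ?_, ?_⟩, fun C t => ⟨g t C, rfl⟩, ?_⟩
  · -- support on configurations
    intro C t hC
    have hgC : g t C = 0 := by
      by_contra h
      exact (hmemSt t C).mp (hgsuppSt t C h) (hz0 C t hC)
    show (g t C : ℝ≥0∞) = 0
    rw [hgC]; simp
  · -- constraint (1)
    intro t
    show ∑' C, (g t C : ℝ≥0∞) = (m t : ℝ≥0∞)
    have h1 : ∑' C, (g t C : ℝ≥0∞) = ∑ C ∈ St t, (g t C : ℝ≥0∞) := by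
      have := htz' t (fun _ => 1)
      simpa using this
    have h2 : ∑' C, z C t = ∑ C ∈ St t, (fz C t : ℝ≥0∞) := by
      have := htz t (fun _ => 1)
      simpa using this
    rw [h1, hg2 t, ← h2, hm t]
  · -- constraint (3)
    intro t v hv
    show ∑ j ∈ Finset.univ.filter (fun j => p t j = v), x j t
      ≤ ∑' C, (C v : ℝ≥0∞) * (g t C : ℝ≥0∞)
    calc ∑ j ∈ Finset.univ.filter (fun j => p t j = v), x j t
        ≤ ∑' C, (C v : ℝ≥0∞) * z C t := hbig t v hv
      _ = ∑ C ∈ St t, (C v : ℝ≥0∞) * fz C t := htz t _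
      _ = ∑ C ∈ St t, (C v : ℝ≥0∞) * g t C := (hg3 t v hv).symm
      _ = ∑' C, (C v : ℝ≥0∞) * (g t C : ℝ≥0∞) := (htz' t _).symm
  · -- constraint (4)
    intro t
    show (∑' C, confSize (bigSet ε T p t) C * (g t C : ℝ≥0∞)) +
      ∑ v ∈ smallSet ε T p t, v * ∑ j ∈ Finset.univ.filter (fun j => p t j = v), x j t ≤
      (m t : ℝ≥0∞) * ENNReal.ofReal ((1 + ε) * T)
    have hswap : ∀ h : (ℝ≥0∞ → ℕ) → ℝ≥0∞,
        ∑ C ∈ St t, confSize (bigSet ε T p t) C * h C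
          = ∑ v ∈ bigSet ε T p t, v * ∑ C ∈ St t, (C v : ℝ≥0∞) * h C := by
      intro h
      simp only [confSize, Finset.sum_mul]
      rw [Finset.sum_comm]
      refine Finset.sum_congr rfl fun v _ => ?_
      rw [Finset.mul_sum]
      exact Finset.sum_congr rfl fun C _ => by ring
    have heq : ∑' C, confSize (bigSet ε T p t) C * (g t C : ℝ≥0∞)
        = ∑' C, confSize (bigSet ε T p t) C * z C t := by
      rw [htz' t _, htz t _, hswap, hswap]
      exact Finset.sum_congr rfl fun v hv => by rw [hg3 t v hv]
    rw [heq]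
    exact hsize t
  · -- finiteness and cardinality
    intro t
    simp only []
    have hset : {C : ℝ≥0∞ → ℕ | (g t C : ℝ≥0∞) ≠ 0}
        = ↑((St t).filter fun C => g t C ≠ 0) := by
      ext C
      simp only [Set.mem_setOf_eq, Finset.coe_filter, Set.mem_setOf_eq, ne_eq,
        Nat.cast_eq_zero]
      exact ⟨fun h => ⟨hgsuppSt t C h, h⟩, fun h => h.2⟩
    constructor
    · rw [hset]
      exact (Finset.finite_toSet _)
    · rw [hset, Set.ncard_coe_finset]
      have hd : 1 ≤ (bigSet ε T p t).card + 1 := Nat.le_add_left 1 _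
      have := card_le_log hd hMx1 (hg4 t) hMle
      calc ((((St t).filter fun C => g t C ≠ 0).card : ℕ) : ℝ)
          ≤ 2 * (((bigSet ε T p t).card + 1 : ℕ) : ℝ)
            * Real.logb 2 (4 * (((bigSet ε T p t).card + 1 : ℕ) : ℝ) * ((1 + ε) / ε ^ 2)) :=
            this
        _ = 2 * ((bigSet ε T p t).card + 1) *
            Real.logb 2 (4 * ((bigSet ε T p t).card + 1) * (1 + ε) / ε ^ 2) := by
            push_cast
            rw [mul_div_assoc]
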